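/- Let α ≥ 8C for an absolute constant C ≥ 1, and let A be a 2×2 invertible real matrix with unit eigenvectors e_u, e_s and eigenvalues λ, λ⁻¹ with |λ| ≥ 2, satisfying |e_x·e_s| ≤ C/α, |e_y·e_u| ≤ C/α, |e_x·e_u| ≥ 1 − C/α, |e_y·e_s| ≥ 1 − C/α, and |e_u·e_s| ≤ C/α, where e_x = (1,0), e_y = (0,1). Then |e_x · A e_y| / |e_x · A e_x| ≤ C'/α for some constant C' depending only on C. -/

import Mathlib

open Matrix

/-- The Euclidean norm of a vector in ℝ². -/
noncomputable def en (v : Fin 2 → ℝ) : ℝ := Real.sqrt (v 0 ^ 2 + v 1 ^ 2)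

/-- The Euclidean dot product on ℝ². -/
def dot (v w : Fin 2 → ℝ) : ℝ := v 0 * w 0 + v 1 * w 1

set_option maxHeartbeats 1000000 in
/-- key cross-derivative estimate: if `A` is invertible with
unit eigenvectors `e_u, e_s` and eigenvalues `λ, λ⁻¹`, `|λ| ≥ 2`, and the
eigenvectors are nearly aligned with the coordinate axes (`|e_x·e_s| ≤ C/α`,
`|e_y·e_u| ≤ C/α`, `|e_x·e_u| ≥ 1 − C/α`, `|e_y·e_s| ≥ 1 − C/α`,
`|e_u·e_s| ≤ C/α`), then `|e_x·A e_y| / |e_x·A e_x| ≤ C'/α` for a constant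
`C'` depending only on `C`, provided `α ≥ 8C`. -/
theorem stmt19 (C : ℝ) (hC : 1 ≤ C) :
    ∃ C' > (0:ℝ), ∀ α : ℝ, 8 * C ≤ α →
    ∀ (A : Matrix (Fin 2) (Fin 2) ℝ) (eu es : Fin 2 → ℝ) (lam : ℝ),
      IsUnit A →
      en eu = 1 → en es = 1 →
      A.mulVec eu = lam • eu → A.mulVec es = lam⁻¹ • es →
      2 ≤ |lam| →
      |dot ![1, 0] es| ≤ C / α →
      |dot ![0, 1] eu| ≤ C / α →
      1 - C / α ≤ |dot ![1, 0] eu| →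
      1 - C / α ≤ |dot ![0, 1] es| →
      |dot eu es| ≤ C / α →
      |dot ![1, 0] (A.mulVec ![0, 1])| / |dot ![1, 0] (A.mulVec ![1, 0])| ≤
        C' / α := by
  refine ⟨2 * C, by linarith, ?_⟩
  intro α hα A eu es lam _hA heu hes hAeu hAes hlam hxs hyu hxu hys hus
  have hα0 : (0:ℝ) < α := by linarith
  have ht0 : 0 < C / α := div_pos (by linarith) hα0
  have ht : C / α ≤ 1 / 8 := by rw [div_le_iff₀ hα0]; nlinarith
  simp only [dot, Matrix.cons_val_zero, Matrix.cons_val_one, Matrix.head_cons,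
    one_mul, zero_mul, mul_zero, mul_one, add_zero, zero_add] at hxs hyu hxu hys ⊢
  -- component facts
  have heu2 : eu 0 ^ 2 + eu 1 ^ 2 = 1 := by
    have := Real.sqrt_eq_one.mp heu
    exact this
  have hes2 : es 0 ^ 2 + es 1 ^ 2 = 1 := Real.sqrt_eq_one.mp hes
  have hu0 : (7:ℝ)/8 ≤ |eu 0| := by linarith
  have hs1 : (7:ℝ)/8 ≤ |es 1| := by linarith
  have hu1 : |eu 1| ≤ 1/8 := by linarith
  have hs0 : |es 0| ≤ 1/8 := by linarith
  have hu0' : |eu 0| ≤ 1 := by nlinarith [sq_abs (eu 0), sq_nonneg (eu 1)]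
  have hlam0 : (0:ℝ) < |lam| := by linarith
  have hlamne : lam ≠ 0 := by
    intro h; rw [h, abs_zero] at hlam; linarith
  have hlinv : |lam⁻¹| ≤ 1/2 := by
    rw [abs_inv]
    rw [inv_le_comm₀ (by linarith) (by norm_num)]
    linarith
  -- determinant
  set d0 : ℝ := eu 0 * es 1 - eu 1 * es 0 with hd0def
  have hd0 : (3:ℝ)/4 ≤ |d0| := by
    have h1 : |eu 0 * es 1| - |eu 1 * es 0| ≤ |d0| := abs_sub_abs_le_abs_sub _ _
    rw [abs_mul, abs_mul] at h1
    nlinarith [abs_nonneg (eu 1), abs_nonneg (es 0), abs_nonneg (eu 0), abs_nonneg (es 1)]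
  have hd0ne : d0 ≠ 0 := by
    intro h; rw [h, abs_zero] at hd0; linarith
  -- decompositions of e_x and e_y
  have hex : (![1, 0] : Fin 2 → ℝ) = (es 1 / d0) • eu + (-(eu 1) / d0) • es := by
    funext i
    fin_cases i <;>
      simp only [Fin.zero_eta, Fin.mk_one, Matrix.cons_val_zero, Matrix.cons_val_one, Matrix.head_cons,
        Pi.add_apply, Pi.smul_apply, smul_eq_mul] <;>
      field_simp <;> ring
  have hey : (![0, 1] : Fin 2 → ℝ) = (-(es 0) / d0) • eu + (eu 0 / d0) • es := by
    funext i
    fin_cases i <;>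
      simp only [Fin.zero_eta, Fin.mk_one, Matrix.cons_val_zero, Matrix.cons_val_one, Matrix.head_cons,
        Pi.add_apply, Pi.smul_apply, smul_eq_mul] <;>
      field_simp <;> ring
  have hAx : (A.mulVec ![1, 0]) 0 = (lam * (es 1 * eu 0) - lam⁻¹ * (eu 1 * es 0)) / d0 := by
    rw [hex, Matrix.mulVec_add, Matrix.mulVec_smul, Matrix.mulVec_smul, hAeu, hAes]
    simp only [Pi.add_apply, Pi.smul_apply, smul_eq_mul]
    field_simp; ring
  have hAy : (A.mulVec ![0, 1]) 0 = (eu 0 * es 0 * (lam⁻¹ - lam)) / d0 := by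
    rw [hey, Matrix.mulVec_add, Matrix.mulVec_smul, Matrix.mulVec_smul, hAeu, hAes]
    simp only [Pi.add_apply, Pi.smul_apply, smul_eq_mul]
    field_simp; ring
  rw [hAx, hAy, abs_div, abs_div, div_div_div_cancel_right₀ (abs_ne_zero.mpr hd0ne)]
  -- bounds
  set N : ℝ := eu 0 * es 0 * (lam⁻¹ - lam)
  set D : ℝ := lam * (es 1 * eu 0) - lam⁻¹ * (eu 1 * es 0)
  have hN : |N| ≤ (C / α) * (|lam| + 1/2) := by
    have : |N| = |eu 0| * |es 0| * |lam⁻¹ - lam| := by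
      rw [show N = eu 0 * es 0 * (lam⁻¹ - lam) from rfl, abs_mul, abs_mul]
    rw [this]
    have h3 : |lam⁻¹ - lam| ≤ |lam| + 1/2 := by
      calc |lam⁻¹ - lam| ≤ |lam⁻¹| + |lam| := abs_sub _ _
        _ ≤ |lam| + 1/2 := by linarith
    have h4 : |eu 0| * |es 0| ≤ 1 * (C / α) :=
      mul_le_mul hu0' hxs (abs_nonneg _) (by norm_num)
    have h5 : |eu 0| * |es 0| * |lam⁻¹ - lam| ≤ 1 * (C / α) * (|lam| + 1/2) :=
      mul_le_mul h4 h3 (abs_nonneg _) (by positivity)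
    calc |eu 0| * |es 0| * |lam⁻¹ - lam| ≤ 1 * (C / α) * (|lam| + 1/2) := h5
      _ = (C / α) * (|lam| + 1/2) := by ring
  have hD : (3:ℝ)/4 * |lam| ≤ |D| := by
    have h1 : |lam * (es 1 * eu 0)| - |lam⁻¹ * (eu 1 * es 0)| ≤ |D| := abs_sub_abs_le_abs_sub _ _
    rw [abs_mul, abs_mul, abs_mul, abs_mul] at h1
    have h2 : (7:ℝ)/8 * (7/8) ≤ |es 1| * |eu 0| :=
      mul_le_mul hs1 hu0 (by norm_num) (abs_nonneg _)
    have h2' : |lam| * (7/8 * (7/8)) ≤ |lam| * (|es 1| * |eu 0|) :=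
      mul_le_mul_of_nonneg_left h2 (abs_nonneg lam)
    have h3 : |eu 1| * |es 0| ≤ (1:ℝ)/8 * (1/8) :=
      mul_le_mul hu1 hs0 (abs_nonneg _) (by norm_num)
    have h3' : |lam⁻¹| * (|eu 1| * |es 0|) ≤ 1/2 * (1/8 * (1/8)) :=
      mul_le_mul hlinv h3 (by positivity) (by norm_num)
    linarith [h1, h2', h3', hlam]
  have hDpos : (0:ℝ) < |D| := by linarith
  rw [div_le_div_iff₀ hDpos hα0]
  have hCα : C / α * α = C := div_mul_cancel₀ C hα0.ne'
  nlinarith [abs_nonneg N, hN, hD, hlam, mul_le_mul_of_nonneg_right hN hα0.le]
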